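/- Let g ≥ 3. Then the monomial ideal I = ⟨ xᵢxⱼ : 1 ≤ i ≤ j ≤ g-3 ⟩ + ⟨ xᵢ x_{g-2}² : 1 ≤ i ≤ g-3 ⟩ + ⟨ x_{g-2}⁴ ⟩ in k[x₁,...,x_g] (all variables of degree 1) has Hilbert function dim_k (k[x]/I)_d = (2d-1)(g-1) for all d ≥ 2. -/

import Mathlib

open MvPolynomial Finsupp
namespace CanonicalGinAux

lemma degree_single' {σ : Type*} (i : σ) (n : ℕ) : (Finsupp.single i n).degree = n := by
  classical
  rcases eq_or_ne n 0 with rfl | h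
  · simp [Finsupp.degree]
  · rw [Finsupp.degree_apply, Finsupp.support_single_ne_zero _ h, Finset.sum_singleton,
      Finsupp.single_eq_same]

lemma degree_add' {σ : Type*} (f h : σ →₀ ℕ) : (f + h).degree = f.degree + h.degree := by
  simp only [Finsupp.degree_eq_weight_one, map_add]

noncomputable def enc (g d : ℕ) (t u v : Fin g) (x : Option (Fin (g-3)) × ℕ × ℕ) :
    Fin g →₀ ℕ :=
  (x.1.elim 0 fun i => Finsupp.single (⟨i.1, lt_of_lt_of_le i.2 (Nat.sub_le g 3)⟩ : Fin g) 1)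
    + Finsupp.single t x.2.1 + Finsupp.single u x.2.2
    + Finsupp.single v (d - ((x.1.elim 0 fun _ => 1) + x.2.1 + x.2.2))

def Pfin (g d : ℕ) : Finset (Option (Fin (g-3)) × ℕ × ℕ) :=
  (Finset.univ ×ˢ Finset.range 4 ×ˢ Finset.range (d+1)).filter
    (fun x => (∀ i, x.1 = some i → x.2.1 ≤ 1) ∧ (x.1.elim 0 fun _ => 1) + x.2.1 + x.2.2 ≤ d)

lemma count_b (d c : ℕ) :
    (∑ b ∈ Finset.range (d+1), if c + b ≤ d then 1 else 0) = d + 1 - c := by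
  classical
  rw [← Finset.card_filter]
  have : (Finset.range (d+1)).filter (fun b => c + b ≤ d) = Finset.range (d+1-c) := by
    ext b; simp only [Finset.mem_filter, Finset.mem_range]; omega
  rw [this, Finset.card_range]

lemma count_b' (d c : ℕ) (P : Prop) [Decidable P] :
    (∑ b ∈ Finset.range (d+1), if P ∧ c + b ≤ d then 1 else 0)
      = if P then d + 1 - c else 0 := by
  split_ifs with h
  · simp only [h, true_and]; exact count_b d c
  · simp [h]

lemma card_Pfin (g d : ℕ) (hg : 3 ≤ g) (hd : 2 ≤ d) :
    (Pfin g d).card = (2*d-1)*(g-1) := by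
  classical
  rw [Pfin, Finset.card_filter, Finset.sum_product, Fintype.sum_option]
  have hnone : (∑ ab ∈ Finset.range 4 ×ˢ Finset.range (d+1),
      if ((∀ i, ((none : Option (Fin (g-3))), ab).1 = some i → ((none : Option (Fin (g-3))), ab).2.1 ≤ 1)
        ∧ (((none : Option (Fin (g-3))), ab).1.elim 0 fun _ => 1) + ((none : Option (Fin (g-3))), ab).2.1 + ((none : Option (Fin (g-3))), ab).2.2 ≤ d)
      then 1 else 0) = 4*d - 2 := by
    have hiff : ∀ ab : ℕ × ℕ,
        ((∀ i, ((none : Option (Fin (g-3))), ab).1 = some i → ((none : Option (Fin (g-3))), ab).2.1 ≤ 1)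
        ∧ (((none : Option (Fin (g-3))), ab).1.elim 0 fun _ => 1) + ((none : Option (Fin (g-3))), ab).2.1 + ((none : Option (Fin (g-3))), ab).2.2 ≤ d)
        ↔ (True ∧ ab.1 + ab.2 ≤ d) := by
      intro ab; simp
    simp only [hiff]
    rw [Finset.sum_product]
    rw [show (4:ℕ) = 3+1 from rfl, Finset.sum_range_succ, Finset.sum_range_succ,
      Finset.sum_range_succ, Finset.sum_range_succ, Finset.sum_range_zero]
    rw [count_b' d 0 True, count_b' d 1 True, count_b' d 2 True, count_b' d 3 True]
    simp only [if_true]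
    omega
  have hsome : ∀ i : Fin (g-3), (∑ ab ∈ Finset.range 4 ×ˢ Finset.range (d+1),
      if ((∀ j, ((some i : Option (Fin (g-3))), ab).1 = some j → ((some i : Option (Fin (g-3))), ab).2.1 ≤ 1)
        ∧ (((some i : Option (Fin (g-3))), ab).1.elim 0 fun _ => 1) + ((some i : Option (Fin (g-3))), ab).2.1 + ((some i : Option (Fin (g-3))), ab).2.2 ≤ d)
      then 1 else 0) = 2*d - 1 := by
    intro i
    have hiff : ∀ ab : ℕ × ℕ,
        ((∀ j, ((some i : Option (Fin (g-3))), ab).1 = some j → ((some i : Option (Fin (g-3))), ab).2.1 ≤ 1)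
        ∧ (((some i : Option (Fin (g-3))), ab).1.elim 0 fun _ => 1) + ((some i : Option (Fin (g-3))), ab).2.1 + ((some i : Option (Fin (g-3))), ab).2.2 ≤ d)
        ↔ (ab.1 ≤ 1 ∧ (1 + ab.1) + ab.2 ≤ d) := by
      intro ab
      constructor
      · rintro ⟨h1, h2⟩
        exact ⟨h1 i rfl, by simpa [add_assoc] using h2⟩
      · rintro ⟨h1, h2⟩
        refine ⟨fun j hj => h1, by simpa [add_assoc] using h2⟩
    simp only [hiff]
    rw [Finset.sum_product]
    rw [show (4:ℕ) = 3+1 from rfl, Finset.sum_range_succ, Finset.sum_range_succ,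
      Finset.sum_range_succ, Finset.sum_range_succ, Finset.sum_range_zero]
    dsimp only
    rw [@count_b' d (1+0) (0 ≤ 1) (Nat.decLe _ _), @count_b' d (1+1) (1 ≤ 1) (Nat.decLe _ _),
      @count_b' d (1+2) (2 ≤ 1) (Nat.decLe _ _), @count_b' d (1+3) (3 ≤ 1) (Nat.decLe _ _)]
    norm_num
    omega
  simp only [hsome]
  rw [hnone, Finset.sum_const, Finset.card_univ, Fintype.card_fin, smul_eq_mul]
  obtain ⟨e, rfl⟩ : ∃ e, d = e + 2 := ⟨d - 2, by omega⟩
  obtain ⟨h, rfl⟩ : ∃ h, g = h + 3 := ⟨g - 3, by omega⟩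
  have h1 : 4 * (e+2) - 2 = 4*e + 6 := by omega
  have h2 : 2 * (e+2) - 1 = 2*e + 3 := by omega
  have h3 : (h+3) - 3 = h := by omega
  have h4 : (h+3) - 1 = h + 2 := by omega
  rw [h1, h2, h3, h4]
  ring

set_option maxHeartbeats 1000000 in
theorem aux {k : Type*} [Field k] (g : ℕ) (hg : 3 ≤ g) (d : ℕ) (hd : 2 ≤ d)
    (t u v : Fin g) (ht : (t:ℕ) = g - 3) (hu : (u:ℕ) = g - 2) (hv : (v:ℕ) = g - 1) :
    Module.finrank k
        ((MvPolynomial.homogeneousSubmodule (Fin g) k d).map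
          (Ideal.Quotient.mkₐ k (Ideal.span
            (({p : MvPolynomial (Fin g) k | ∃ i j : Fin g, i ≤ j ∧ (j : ℕ) + 4 ≤ g ∧
                p = X i * X j} ∪
              {p : MvPolynomial (Fin g) k | ∃ i : Fin g, (i : ℕ) + 4 ≤ g ∧
                p = X i * X t ^ 2} ∪
              {X t ^ 4}) : Set (MvPolynomial (Fin g) k)))).toLinearMap)
      = (2 * d - 1) * (g - 1) := by
  classical
  -- the exponent set
  set Sexp : Set (Fin g →₀ ℕ) :=
    {s | ∃ i j : Fin g, i ≤ j ∧ (j:ℕ)+4 ≤ g ∧ s = Finsupp.single i 1 + Finsupp.single j 1} ∪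
    {s | ∃ i : Fin g, (i:ℕ)+4 ≤ g ∧ s = Finsupp.single i 1 + Finsupp.single t 2} ∪
    {Finsupp.single t 4} with hSexp
  have hgen : (({p : MvPolynomial (Fin g) k | ∃ i j : Fin g, i ≤ j ∧ (j : ℕ) + 4 ≤ g ∧
                p = X i * X j} ∪
              {p : MvPolynomial (Fin g) k | ∃ i : Fin g, (i : ℕ) + 4 ≤ g ∧
                p = X i * X t ^ 2} ∪
              {X t ^ 4}) : Set (MvPolynomial (Fin g) k))
      = (fun s => monomial s (1:k)) '' Sexp := by
    rw [hSexp, Set.image_union, Set.image_union, Set.image_singleton]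
    congr 1
    · congr 1
      · ext p
        constructor
        · rintro ⟨i, j, hij, hj, rfl⟩
          exact ⟨_, ⟨i, j, hij, hj, rfl⟩, by rw [X, X, monomial_mul, one_mul]⟩
        · rintro ⟨s, ⟨i, j, hij, hj, rfl⟩, rfl⟩
          exact ⟨i, j, hij, hj, by rw [X, X, monomial_mul, one_mul]⟩
      · ext p
        constructor
        · rintro ⟨i, hi, rfl⟩
          exact ⟨_, ⟨i, hi, rfl⟩, by rw [X, X_pow_eq_monomial, monomial_mul, one_mul]⟩
        · rintro ⟨s, ⟨i, hi, rfl⟩, rfl⟩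
          exact ⟨i, hi, by rw [X, X_pow_eq_monomial, monomial_mul, one_mul]⟩
    · rw [X_pow_eq_monomial]
  have hmem : ∀ p : MvPolynomial (Fin g) k,
      p ∈ Ideal.span ((fun s => monomial s (1:k)) '' Sexp) ↔
        ∀ m ∈ p.support, ∃ s ∈ Sexp, s ≤ m := fun p => mem_ideal_span_monomial_image
  have htns : ¬ ((t:ℕ) + 4 ≤ g) := by omega
  have hsmall_ne_t : ∀ i : Fin g, (i:ℕ)+4 ≤ g → i ≠ t := by
    intro i hi h
    rw [Fin.ext_iff] at h; omega
  have hcases : ∀ y : Fin g, (y:ℕ)+4 ≤ g ∨ y = t ∨ y = u ∨ y = v := by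
    intro y
    have hy := y.isLt
    by_cases h1 : (y:ℕ) = g - 3
    · exact Or.inr (Or.inl (Fin.ext (by omega)))
    by_cases h2 : (y:ℕ) = g - 2
    · exact Or.inr (Or.inr (Or.inl (Fin.ext (by omega))))
    by_cases h3 : (y:ℕ) = g - 1
    · exact Or.inr (Or.inr (Or.inr (Fin.ext (by omega))))
    exact Or.inl (by omega)
  -- helper for building ≤
  have hle2 : ∀ (m : Fin g →₀ ℕ) (i j : Fin g) (a b : ℕ), i ≠ j → a ≤ m i → b ≤ m j →
      Finsupp.single i a + Finsupp.single j b ≤ m := by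
    intro m i j a b hij ha hb
    rw [Finsupp.le_def]
    intro x
    simp only [Finsupp.add_apply, Finsupp.single_apply]
    by_cases hix : i = x
    · subst hix
      simp only [if_pos rfl, if_neg (Ne.symm hij)]
      simpa using ha
    · by_cases hjx : j = x
      · subst hjx
        simp only [if_pos rfl, if_neg hix]
        simpa using hb
      · simp [hix, hjx]
  have hbad_iff : ∀ m : Fin g →₀ ℕ, (∃ s ∈ Sexp, s ≤ m) ↔
      ((∃ i j : Fin g, i ≠ j ∧ (i:ℕ)+4 ≤ g ∧ (j:ℕ)+4 ≤ g ∧ 1 ≤ m i ∧ 1 ≤ m j) ∨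
       (∃ i : Fin g, (i:ℕ)+4 ≤ g ∧ 2 ≤ m i) ∨
       (∃ i : Fin g, (i:ℕ)+4 ≤ g ∧ 1 ≤ m i ∧ 2 ≤ m t) ∨
       4 ≤ m t) := by
    intro m
    constructor
    · rintro ⟨s, hs, hsm⟩
      rw [Finsupp.le_def] at hsm
      rcases hs with (⟨i, j, hij, hj, rfl⟩ | ⟨i, hi, rfl⟩) | rfl
      · rcases eq_or_ne i j with rfl | hne
        · refine Or.inr (Or.inl ⟨i, hj, ?_⟩)
          have := hsm i
          simpa using this
        · refine Or.inl ⟨i, j, hne, by omega, hj, ?_, ?_⟩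
          · have := hsm i
            simpa [Finsupp.single_apply, hne, hne.symm] using this
          · have := hsm j
            simpa [Finsupp.single_apply, hne, hne.symm] using this
      · refine Or.inr (Or.inr (Or.inl ⟨i, hi, ?_, ?_⟩))
        · have := hsm i
          simpa [Finsupp.single_apply, hsmall_ne_t i hi, (hsmall_ne_t i hi).symm] using this
        · have := hsm t
          simpa [Finsupp.single_apply, hsmall_ne_t i hi, (hsmall_ne_t i hi).symm] using this
      · refine Or.inr (Or.inr (Or.inr ?_))
        have := hsm t
        simpa using this
    · rintro (⟨i, j, hne, hi, hj, h1, h2⟩ | ⟨i, hi, h2⟩ | ⟨i, hi, h1, h2⟩ | h4)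
      · rcases le_total i j with hij | hij
        · exact ⟨_, Or.inl (Or.inl ⟨i, j, hij, hj, rfl⟩), hle2 m i j 1 1 hne h1 h2⟩
        · exact ⟨_, Or.inl (Or.inl ⟨j, i, hij, hi, rfl⟩), hle2 m j i 1 1 (Ne.symm hne) h2 h1⟩
      · refine ⟨_, Or.inl (Or.inl ⟨i, i, le_refl i, hi, rfl⟩), ?_⟩
        rw [Finsupp.le_def]
        intro x
        simp only [Finsupp.add_apply, Finsupp.single_apply]
        by_cases hix : i = x
        · subst hix
          simp only [if_pos rfl]
          simp only [if_true, eq_self_iff_true]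
          omega
        · simp [hix]
      · exact ⟨_, Or.inl (Or.inr ⟨i, hi, rfl⟩), hle2 m i t 1 2 (hsmall_ne_t i hi) h1 h2⟩
      · exact ⟨_, Or.inr rfl, Finsupp.single_le_iff.2 h4⟩
  -- value lemmas for the encoding
  have henct : ∀ x : Option (Fin (g-3)) × ℕ × ℕ, enc g d t u v x t = x.2.1 := by
    rintro ⟨o, a, b⟩
    cases o with
    | none =>
      simp only [enc, Option.elim, Finsupp.coe_add, Pi.add_apply, Finsupp.coe_zero,
        Pi.zero_apply, Finsupp.single_apply, Fin.ext_iff, ht, hu, hv]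
      split_ifs <;> omega
    | some i =>
      have hi := i.isLt
      simp only [enc, Option.elim, Finsupp.coe_add, Pi.add_apply, Finsupp.single_apply,
        Fin.ext_iff, ht, hu, hv]
      split_ifs <;> omega
  have hencu : ∀ x : Option (Fin (g-3)) × ℕ × ℕ, enc g d t u v x u = x.2.2 := by
    rintro ⟨o, a, b⟩
    cases o with
    | none =>
      simp only [enc, Option.elim, Finsupp.coe_add, Pi.add_apply, Finsupp.coe_zero,
        Pi.zero_apply, Finsupp.single_apply, Fin.ext_iff, ht, hu, hv]
      split_ifs <;> omega
    | some i =>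
      have hi := i.isLt
      simp only [enc, Option.elim, Finsupp.coe_add, Pi.add_apply, Finsupp.single_apply,
        Fin.ext_iff, ht, hu, hv]
      split_ifs <;> omega
  have hencv : ∀ x : Option (Fin (g-3)) × ℕ × ℕ,
      enc g d t u v x v = d - ((x.1.elim 0 fun _ => 1) + x.2.1 + x.2.2) := by
    rintro ⟨o, a, b⟩
    cases o with
    | none =>
      simp only [enc, Option.elim, Finsupp.coe_add, Pi.add_apply, Finsupp.coe_zero,
        Pi.zero_apply, Finsupp.single_apply, Fin.ext_iff, ht, hu, hv]
      split_ifs <;> omega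
    | some i =>
      have hi := i.isLt
      simp only [enc, Option.elim, Finsupp.coe_add, Pi.add_apply, Finsupp.single_apply,
        Fin.ext_iff, ht, hu, hv]
      split_ifs <;> omega
  have hencs : ∀ (x : Option (Fin (g-3)) × ℕ × ℕ) (y : Fin g), (y:ℕ)+4 ≤ g →
      enc g d t u v x y = x.1.elim 0 (fun i => if (y:ℕ) = (i:ℕ) then 1 else 0) := by
    rintro ⟨o, a, b⟩ y hy
    cases o with
    | none =>
      simp only [enc, Option.elim, Finsupp.coe_add, Pi.add_apply, Finsupp.coe_zero,
        Pi.zero_apply, Finsupp.single_apply, Fin.ext_iff, ht, hu, hv]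
      split_ifs <;> omega
    | some i =>
      have hi := i.isLt
      simp only [enc, Option.elim, Finsupp.coe_add, Pi.add_apply, Finsupp.single_apply,
        Fin.ext_iff, ht, hu, hv]
      split_ifs <;> omega
  have hPmem : ∀ x : Option (Fin (g-3)) × ℕ × ℕ, x ∈ Pfin g d ↔
      (x.2.1 < 4 ∧ x.2.2 < d + 1 ∧ (∀ i, x.1 = some i → x.2.1 ≤ 1) ∧
        (x.1.elim 0 fun _ => 1) + x.2.1 + x.2.2 ≤ d) := by
    rintro ⟨o, a, b⟩
    simp only [Pfin, Finset.mem_filter, Finset.mem_product, Finset.mem_univ, true_and,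
      Finset.mem_range]
    tauto
  have hdeg : ∀ x ∈ Pfin g d, (enc g d t u v x).degree = d := by
    rintro ⟨o, a, b⟩ hx
    obtain ⟨ha4, hbd, hle1, hwt⟩ := (hPmem _).1 hx
    cases o with
    | none =>
      simp only [Option.elim] at hwt
      simp only [enc, Option.elim]
      rw [degree_add', degree_add', degree_add', degree_single', degree_single',
        degree_single']
      simp only [map_zero]
      omega
    | some i =>
      simp only [Option.elim] at hwt
      simp only [enc, Option.elim]
      rw [degree_add', degree_add', degree_add', degree_single', degree_single',
        degree_single', degree_single']
      omega
  have hstd : ∀ x ∈ Pfin g d, ¬ ∃ s ∈ Sexp, s ≤ enc g d t u v x := by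
    rintro ⟨o, a, b⟩ hx
    rw [hbad_iff]
    obtain ⟨ha4, hbd, hle1, hwt⟩ := (hPmem _).1 hx
    simp only at ha4 hbd hle1 hwt
    rintro (⟨i, j, hne, hi, hj, h1, h2⟩ | ⟨i, hi, h2⟩ | ⟨i, hi, h1, h2⟩ | h4)
    · rw [hencs _ i hi] at h1
      rw [hencs _ j hj] at h2
      cases o with
      | none => simp only [Option.elim] at h1; omega
      | some i0 =>
        simp only [Option.elim] at h1 h2
        have e1 : (i:ℕ) = (i0:ℕ) := by
          by_contra hcon; rw [if_neg hcon] at h1; omega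
        have e2 : (j:ℕ) = (i0:ℕ) := by
          by_contra hcon; rw [if_neg hcon] at h2; omega
        exact hne (Fin.ext (e1.trans e2.symm))
    · rw [hencs _ i hi] at h2
      cases o with
      | none => simp only [Option.elim] at h2; omega
      | some i0 =>
        simp only [Option.elim] at h2
        by_cases hc : (i:ℕ) = (i0:ℕ)
        · rw [if_pos hc] at h2; omega
        · rw [if_neg hc] at h2; omega
    · rw [hencs _ i hi] at h1
      rw [henct] at h2
      cases o with
      | none => simp only [Option.elim] at h1; omega
      | some i0 =>
        have := hle1 i0 rfl
        simp only at this h2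
        omega
    · rw [henct] at h4
      simp only at h4
      omega
  have hinj : Set.InjOn (enc g d t u v) (Pfin g d) := by
    rintro ⟨o, a, b⟩ hx ⟨o', a', b'⟩ hy hxy
    have hA : a = a' := by
      have h1 := henct (o, a, b)
      have h2 := henct (o', a', b')
      rw [hxy] at h1
      rw [h1] at h2
      simpa using h2
    have hBb : b = b' := by
      have h1 := hencu (o, a, b)
      have h2 := hencu (o', a', b')
      rw [hxy] at h1
      rw [h1] at h2
      simpa using h2
    have hO : o = o' := by
      cases o with
      | none =>
        cases o' with
        | none => rfl
        | some i' =>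
          exfalso
          have hz : (i':ℕ) < g := by have := i'.isLt; omega
          have hzs : ((⟨(i':ℕ), hz⟩ : Fin g) : ℕ) + 4 ≤ g := by
            have := i'.isLt; simp only []; omega
          have e : enc g d t u v (none, a, b) ⟨(i':ℕ), hz⟩
              = enc g d t u v (some i', a', b') ⟨(i':ℕ), hz⟩ := by rw [hxy]
          rw [hencs _ _ hzs, hencs _ _ hzs] at e
          simp at e
      | some i =>
        cases o' with
        | none =>
          exfalso
          have hz : (i:ℕ) < g := by have := i.isLt; omega
          have hzs : ((⟨(i:ℕ), hz⟩ : Fin g) : ℕ) + 4 ≤ g := by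
            have := i.isLt; simp only []; omega
          have e : enc g d t u v (some i, a, b) ⟨(i:ℕ), hz⟩
              = enc g d t u v (none, a', b') ⟨(i:ℕ), hz⟩ := by rw [hxy]
          rw [hencs _ _ hzs, hencs _ _ hzs] at e
          simp at e
        | some i' =>
          have hz : (i:ℕ) < g := by have := i.isLt; omega
          have hzs : ((⟨(i:ℕ), hz⟩ : Fin g) : ℕ) + 4 ≤ g := by
            have := i.isLt; simp only []; omega
          have e : enc g d t u v (some i, a, b) ⟨(i:ℕ), hz⟩
              = enc g d t u v (some i', a', b') ⟨(i:ℕ), hz⟩ := by rw [hxy]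
          rw [hencs _ _ hzs, hencs _ _ hzs] at e
          have e2 : (1 : ℕ) = if (i:ℕ) = (i':ℕ) then 1 else 0 := by simpa using e
          have : (i:ℕ) = (i':ℕ) := by
            by_contra hcon
            rw [if_neg hcon] at e2
            omega
          rw [Fin.ext this]
    rw [hA, hBb, hO]
  have htu : t ≠ u := by intro h; rw [Fin.ext_iff] at h; omega
  have htv : t ≠ v := by intro h; rw [Fin.ext_iff] at h; omega
  have huv : u ≠ v := by intro h; rw [Fin.ext_iff] at h; omega
  set B : Finset (Fin g →₀ ℕ) := (Pfin g d).image (enc g d t u v) with hB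
  have hBmem : ∀ m : Fin g →₀ ℕ, m ∈ B ↔ (m.degree = d ∧ ¬ ∃ s ∈ Sexp, s ≤ m) := by
    intro m
    constructor
    · intro hm
      rw [hB, Finset.mem_image] at hm
      obtain ⟨x, hx, rfl⟩ := hm
      exact ⟨hdeg x hx, hstd x hx⟩
    · rintro ⟨hmd, hmstd⟩
      rw [hB, Finset.mem_image]
      have h1 : ∑ y : Fin g, m y = d := by
        rw [← hmd, Finsupp.degree_apply]
        exact (Finset.sum_subset (Finset.subset_univ _)
          (fun y _ hy => Finsupp.notMem_support_iff.mp hy)).symm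
      rw [← Finset.sum_filter_add_sum_filter_not Finset.univ
        (fun y : Fin g => (y:ℕ)+4 ≤ g) (fun y => m y)] at h1
      have h2 : Finset.univ.filter (fun y : Fin g => ¬((y:ℕ)+4 ≤ g))
          = ({t, u, v} : Finset (Fin g)) := by
        ext y
        simp only [Finset.mem_filter, Finset.mem_univ, true_and, Finset.mem_insert,
          Finset.mem_singleton, Fin.ext_iff, ht, hu, hv]
        have := y.isLt
        omega
      have h3 : ∑ y ∈ ({t, u, v} : Finset (Fin g)), m y = m t + (m u + m v) := by
        rw [Finset.sum_insert (by simp [htu, htv]), Finset.sum_insert (by simp [huv]),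
          Finset.sum_singleton]
      rw [h2, h3] at h1
      rw [hbad_iff] at hmstd
      push_neg at hmstd
      obtain ⟨hN1, hN2, hN3, hN4⟩ := hmstd
      by_cases hex : ∃ i : Fin g, (i:ℕ)+4 ≤ g ∧ m i ≠ 0
      · obtain ⟨i, hi, hmi⟩ := hex
        have hilt : (i:ℕ) < g - 3 := by omega
        have hmi1 : m i = 1 := by have := hN2 i hi; omega
        have hsum : ∑ y ∈ Finset.univ.filter (fun y : Fin g => (y:ℕ)+4 ≤ g), m y = m i := by
          apply Finset.sum_eq_single_of_mem
          · simp [hi]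
          · intro j hj hne
            rw [Finset.mem_filter] at hj
            by_contra hj0
            have h1j : 1 ≤ m j := Nat.one_le_iff_ne_zero.2 hj0
            have := hN1 j i hne hj.2 hi h1j
            omega
        rw [hsum] at h1
        have hmt2 : m t ≤ 1 := by
          have := hN3 i hi (by omega)
          omega
        refine ⟨(some ⟨(i:ℕ), hilt⟩, m t, m u), ?_, ?_⟩
        · rw [hPmem]
          refine ⟨by dsimp; omega, by dsimp; omega, ?_, by dsimp; omega⟩
          intro i' _
          dsimp
          omega
        · ext y
          rcases hcases y with hy | rfl | rfl | rfl
          · rw [hencs _ y hy]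
            show (if (y:ℕ) = (i:ℕ) then 1 else 0) = m y
            by_cases hc : (y:ℕ) = (i:ℕ)
            · have : y = i := Fin.ext hc
              subst this
              rw [if_pos hc, hmi1]
            · have hyi : y ≠ i := fun h => hc (by rw [h])
              have hmy : m y = 0 := by
                by_contra h0
                have h1y : 1 ≤ m y := Nat.one_le_iff_ne_zero.2 h0
                have := hN1 y i hyi hy hi h1y
                omega
              rw [hmy, if_neg hc]
          · rw [henct]
          · rw [hencu]
          · rw [hencv]
            dsimp
            omega
      · push_neg at hex
        have hsum : ∑ y ∈ Finset.univ.filter (fun y : Fin g => (y:ℕ)+4 ≤ g), m y = 0 := by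
          apply Finset.sum_eq_zero
          intro j hj
          rw [Finset.mem_filter] at hj
          exact hex j hj.2
        rw [hsum] at h1
        refine ⟨(none, m t, m u), ?_, ?_⟩
        · rw [hPmem]
          refine ⟨by dsimp; omega, by dsimp; omega, ?_, by dsimp; omega⟩
          intro i' h
          exact absurd h (by simp)
        · ext y
          rcases hcases y with hy | rfl | rfl | rfl
          · rw [hencs _ y hy]
            show (0:ℕ) = m y
            exact (hex y hy).symm
          · rw [henct]
          · rw [hencu]
          · rw [hencv]
            dsimp
            omega
  rw [hgen]
  have hBcard : B.card = (2*d-1)*(g-1) := by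
    rw [hB, Finset.card_image_of_injOn hinj, card_Pfin g d hg hd]
  have hzero : ∀ (m : Fin g →₀ ℕ), (∃ s ∈ Sexp, s ≤ m) → ∀ c : k,
      Ideal.Quotient.mkₐ k (Ideal.span ((fun s => monomial s (1:k)) '' Sexp))
        (monomial m c) = 0 := by
    intro m hm c
    rw [Ideal.Quotient.mkₐ_eq_mk, Ideal.Quotient.eq_zero_iff_mem, hmem]
    intro m' hm'
    rcases eq_or_ne c 0 with rfl | hc
    · simp at hm'
    · rw [support_monomial, if_neg hc] at hm'
      simp only [Finset.mem_singleton] at hm'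
      subst hm'
      exact hm
  have hspan : (homogeneousSubmodule (Fin g) k d).map
      (Ideal.Quotient.mkₐ k (Ideal.span ((fun s => monomial s (1:k)) '' Sexp))).toLinearMap
      = Submodule.span k (Set.range (fun m : ↥B =>
          Ideal.Quotient.mkₐ k (Ideal.span ((fun s => monomial s (1:k)) '' Sexp))
            (monomial (m : Fin g →₀ ℕ) (1:k)))) := by
    apply le_antisymm
    · rintro x hx
      obtain ⟨p, hp, rfl⟩ := hx
      have hps : p = ∑ m ∈ p.support, monomial m (coeff m p) :=
        (support_sum_monomial_coeff p).symm
      rw [hps, map_sum]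
      apply Submodule.sum_mem
      intro m hm
      rw [AlgHom.toLinearMap_apply]
      by_cases hbad : ∃ s ∈ Sexp, s ≤ m
      · rw [hzero m hbad]
        exact Submodule.zero_mem _
      · have hdm : m.degree = d := by
          rw [Finsupp.degree_eq_weight_one]
          exact (mem_homogeneousSubmodule _ _).1 hp (MvPolynomial.mem_support_iff.1 hm)
        have hmB : m ∈ B := (hBmem m).2 ⟨hdm, hbad⟩
        have hre : monomial m (coeff m p) = (coeff m p) • monomial m (1:k) := by
          rw [smul_monomial, smul_eq_mul, mul_one]
        rw [hre, map_smul]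
        exact Submodule.smul_mem _ _ (Submodule.subset_span ⟨⟨m, hmB⟩, rfl⟩)
    · rw [Submodule.span_le]
      rintro _ ⟨⟨m, hm⟩, rfl⟩
      exact Submodule.mem_map.2 ⟨monomial m (1:k),
        (mem_homogeneousSubmodule _ _).2 (isHomogeneous_monomial _ ((hBmem m).1 hm).1), rfl⟩
  have hlin : LinearIndependent k (fun m : ↥B =>
      Ideal.Quotient.mkₐ k (Ideal.span ((fun s => monomial s (1:k)) '' Sexp))
        (monomial (m : Fin g →₀ ℕ) (1:k))) := by
    rw [Fintype.linearIndependent_iff]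
    intro c hc i
    have hrepr : ∀ j : ↥B, monomial (j : Fin g →₀ ℕ) (c j)
        = c j • monomial (j : Fin g →₀ ℕ) (1:k) :=
      fun j => by rw [smul_monomial, smul_eq_mul, mul_one]
    have hps : Ideal.Quotient.mkₐ k (Ideal.span ((fun s => monomial s (1:k)) '' Sexp))
        (∑ j : ↥B, monomial (j : Fin g →₀ ℕ) (c j)) = 0 := by
      rw [map_sum]
      simp_rw [hrepr, map_smul]
      exact hc
    rw [Ideal.Quotient.mkₐ_eq_mk, Ideal.Quotient.eq_zero_iff_mem, hmem] at hps
    by_contra hne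
    have hco : coeff (i : Fin g →₀ ℕ) (∑ j : ↥B, monomial (j : Fin g →₀ ℕ) (c j)) = c i := by
      rw [coeff_sum]
      rw [Finset.sum_eq_single_of_mem i (Finset.mem_univ i)]
      · rw [coeff_monomial, if_pos rfl]
      · intro j _ hji
        rw [coeff_monomial, if_neg (fun h => hji (Subtype.ext h))]
    have hsup : (i : Fin g →₀ ℕ) ∈ (∑ j : ↥B, monomial (j : Fin g →₀ ℕ) (c j)).support :=
      MvPolynomial.mem_support_iff.2 (by rw [hco]; exact hne)
    obtain ⟨s, hs, hsm⟩ := hps _ hsup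
    exact ((hBmem i).1 i.2).2 ⟨s, hs, hsm⟩
  rw [hspan, finrank_span_eq_card hlin, Fintype.card_coe, hBcard]

end CanonicalGinAux

/-- The generic initial ideal of the canonical ideal of a nonhyperelliptic curve of genus
`g ≥ 3`: the monomial ideal
`I = ⟨xᵢxⱼ : 1 ≤ i ≤ j ≤ g-3⟩ + ⟨xᵢ x_{g-2}² : 1 ≤ i ≤ g-3⟩ + ⟨x_{g-2}⁴⟩`
in `k[x₁,...,x_g]` (variables of degree `1`, indexed here by `Fin g` with `xᵢ = X (i-1)`)
has Hilbert function `dim_k (k[x]/I)_d = (2d-1)(g-1)` for all `d ≥ 2`. -/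
theorem hilbert_function_canonical_gin {k : Type*} [Field k] (g : ℕ) (hg : 3 ≤ g)
    (d : ℕ) (hd : 2 ≤ d) :
    Module.finrank k
        ((MvPolynomial.homogeneousSubmodule (Fin g) k d).map
          (Ideal.Quotient.mkₐ k (Ideal.span
            (({p : MvPolynomial (Fin g) k | ∃ i j : Fin g, i ≤ j ∧ (j : ℕ) + 4 ≤ g ∧
                p = X i * X j} ∪
              {p : MvPolynomial (Fin g) k | ∃ i : Fin g, (i : ℕ) + 4 ≤ g ∧
                p = X i * X (⟨g - 3, by omega⟩ : Fin g) ^ 2} ∪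
              {X (⟨g - 3, by omega⟩ : Fin g) ^ 4}) : Set (MvPolynomial (Fin g) k)))).toLinearMap)
      = (2 * d - 1) * (g - 1) :=
  CanonicalGinAux.aux g hg d hd ⟨g - 3, by omega⟩ ⟨g - 2, by omega⟩ ⟨g - 1, by omega⟩
    rfl rfl rfl
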